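/- arXiv:1012.1018 — 8 statements merged into one kernel-verified Lean document; each statement's English description precedes it below -/
import Mathlib

section
/- Let M ∈ GL(V) satisfy M⋆ = M and MΩ = Ω, and let p : V → V⁺ denote the linear projection onto V⁺ along V⁻. If v ∈ V is such that p(v) lies in the closure of Ω and p(−M⁻¹v) lies in the closure of Ω, then p(v) = 0, i.e. v ∈ V⁻. -/
noncomputable section
open scoped Classical

open Function

variable {V : Type} [AddCommGroup V] [Module ℝ V]

/-- The quadratic representation `P(x) = 2 L(x)² − L(x²)`. -/
def Pq (mul : V →ₗ[ℝ] V →ₗ[ℝ] V) (x : V) : V →ₗ[ℝ] V :=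
  2 • (mul x ∘ₗ mul x) - mul (mul x x)

/-- The Jordan inverse `x⁻¹ = P(x)⁻¹ x` (junk value `0` when `x` is not invertible). -/
def jinv (mul : V →ₗ[ℝ] V →ₗ[ℝ] V) (x : V) : V :=
  if h : Function.Bijective (Pq mul x) then (LinearEquiv.ofBijective (Pq mul x) h).symm x else 0

/-- The trace form `α(x,y) = Tr L(xy)`. -/
def αf (mul : V →ₗ[ℝ] V →ₗ[ℝ] V) (x y : V) : ℝ :=
  LinearMap.trace ℝ V (mul (mul x y))

/-- The symmetric cone `Ω = {x² : x ∈ V⁺ invertible}`. -/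
def omg (mul : V →ₗ[ℝ] V →ₗ[ℝ] V) (st : V →ₗ[ℝ] V) : Set V :=
  {y | ∃ x, st x = x ∧ Function.Bijective (Pq mul x) ∧ y = mul x x}


/-- If `a` and `-a` both lie in the closure of the symmetric cone, then `a = 0`. -/
theorem aux_closure_neg_eq_zero {V : Type} [NormedAddCommGroup V] [NormedSpace ℝ V]
    [FiniteDimensional ℝ V]
    (mul : V →ₗ[ℝ] V →ₗ[ℝ] V)
    (hcomm : ∀ x y : V, mul x y = mul y x)
    (st : V →ₗ[ℝ] V)
    (hst_invol : ∀ x : V, st (st x) = x)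
    (hst_mul : ∀ x y : V, st (mul x y) = mul (st x) (st y))
    (hα_pos : ∀ x : V, st x = x → x ≠ 0 → 0 < αf mul x x)
    (hα_neg : ∀ x : V, st x = -x → x ≠ 0 → αf mul x x < 0)
    (a : V) (ha : a ∈ closure (omg mul st)) (hna : -a ∈ closure (omg mul st)) :
    a = 0 := by
  rcases subsingleton_or_nontrivial V with h | h
  · exact Subsingleton.elim a 0
  -- the linear functional `A y = Tr L(y)`
  set A : V →ₗ[ℝ] ℝ := (LinearMap.trace ℝ V) ∘ₗ mul with hA
  have hαA : ∀ x y : V, αf mul x y = A (mul x y) := fun x y => rfl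
  -- the quadratic form `Q x = α(x, st x)`
  set Q : V → ℝ := fun x => A (mul x (st x)) with hQdef
  have hQα : ∀ x : V, Q x = αf mul x (st x) := fun x => rfl
  -- continuity basics
  have hst_cont : Continuous st := st.continuous_of_finiteDimensional
  have hC : Continuous fun x : V => LinearMap.toContinuousLinearMap (mul x) :=
    (LinearMap.toContinuousLinearMap.toLinearMap ∘ₗ mul).continuous_of_finiteDimensional
  have hsq_cont : Continuous fun x : V => mul x x := by
    simpa using hC.clm_apply continuous_id
  have hA_cont : Continuous A := A.continuous_of_finiteDimensional
  have hQ_cont : Continuous Q := by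
    have h2 : Continuous fun x : V => mul x (st x) := by
      simpa using hC.clm_apply hst_cont
    exact hA_cont.comp h2
  -- α is invariant under st
  have hαst : ∀ x y : V, αf mul (st x) (st y) = αf mul x y := by
    intro x y
    unfold αf
    have h1 : mul (mul (st x) (st y)) = st ∘ₗ ((mul (mul x y)) ∘ₗ st) := by
      apply LinearMap.ext; intro z
      simp only [LinearMap.comp_apply]
      rw [hst_mul (mul x y) (st z), hst_mul x y, hst_invol]
    have hstst : st ∘ₗ st = LinearMap.id := LinearMap.ext fun z => hst_invol z
    rw [h1, LinearMap.trace_comp_comm', LinearMap.comp_assoc, hstst, LinearMap.comp_id]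
  -- positivity of Q
  have hQpos : ∀ x : V, x ≠ 0 → 0 < Q x := by
    intro x hx
    set u := (2⁻¹ : ℝ) • (x + st x) with hu
    set w := (2⁻¹ : ℝ) • (x - st x) with hw
    have hxu : x = u + w := by rw [hu, hw]; module
    have hstx : st x = u - w := by rw [hu, hw]; module
    have hstu : st u = u := by rw [hu, map_smul, map_add, hst_invol, add_comm]
    have hstw : st w = -w := by
      rw [hw, map_smul, map_sub, hst_invol, ← smul_neg, neg_sub]
    have hcross : αf mul u w = 0 := by
      have h := hαst u w
      rw [hstu, hstw] at h
      have h2 : αf mul u (-w) = -αf mul u w := by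
        simp [αf, map_neg]
      linarith [h, h2]
    have hsplit : Q x = αf mul u u - αf mul w w := by
      rw [hQα, hstx, hxu]
      simp only [hαA, map_add, map_sub, LinearMap.add_apply, LinearMap.sub_apply]
      have hc1 : A (mul u w) = 0 := hcross
      have hc2 : A (mul w u) = 0 := by rw [hcomm w u]; exact hcross
      linarith
    have huw : u ≠ 0 ∨ w ≠ 0 := by
      by_contra hcon
      push_neg at hcon
      exact hx (by rw [hxu, hcon.1, hcon.2, add_zero])
    have h1 : 0 ≤ αf mul u u := by
      rcases eq_or_ne u 0 with h0 | h0
      · simp [αf, h0]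
      · exact le_of_lt (hα_pos u hstu h0)
    have h2 : αf mul w w ≤ 0 := by
      rcases eq_or_ne w 0 with h0 | h0
      · simp [αf, h0]
      · exact le_of_lt (hα_neg w hstw h0)
    rw [hsplit]
    rcases huw with h0 | h0
    · linarith [hα_pos u hstu h0]
    · linarith [hα_neg w hstw h0]
  -- homogeneity of Q
  have hhom : ∀ (r : ℝ) (s : V), Q (r • s) = r ^ 2 * Q s := by
    intro r s
    show A (mul (r • s) (st (r • s))) = _
    rw [map_smul st, map_smul mul]
    simp only [LinearMap.smul_apply, map_smul, smul_eq_mul]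
    ring
  -- the coercivity constant
  have hsph : IsCompact (Metric.sphere (0 : V) 1) := isCompact_sphere 0 1
  have hsph_ne : (Metric.sphere (0 : V) 1).Nonempty :=
    NormedSpace.sphere_nonempty.mpr (by norm_num)
  obtain ⟨x0, hx0mem, hx0min⟩ := hsph.exists_isMinOn hsph_ne hQ_cont.continuousOn
  rw [isMinOn_iff] at hx0min
  have hx0norm : ‖x0‖ = 1 := by simpa using mem_sphere_zero_iff_norm.mp hx0mem
  have hx0ne : x0 ≠ 0 := by
    intro h0; rw [h0, norm_zero] at hx0norm; norm_num at hx0norm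
  set c := Q x0 with hc0
  have hc : 0 < c := hQpos x0 hx0ne
  have hbound : ∀ s : V, c * ‖s‖ ^ 2 ≤ Q s := by
    intro s
    rcases eq_or_ne s 0 with rfl | hs
    · simp [hQdef]
    · have hn : ‖s‖ ≠ 0 := norm_ne_zero_iff.mpr hs
      set t := ‖s‖⁻¹ • s with ht0
      have ht : t ∈ Metric.sphere (0 : V) 1 := by
        rw [mem_sphere_zero_iff_norm, ht0, norm_smul, norm_inv, norm_norm,
          inv_mul_cancel₀ hn]
      have h1 : c ≤ Q t := hx0min t ht
      have h2 : Q t = ‖s‖⁻¹ ^ 2 * Q s := hhom _ _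
      rw [h2] at h1
      have h3 := mul_le_mul_of_nonneg_right h1 (sq_nonneg ‖s‖)
      calc c * ‖s‖ ^ 2 ≤ ‖s‖⁻¹ ^ 2 * Q s * ‖s‖ ^ 2 := h3
        _ = Q s := by field_simp
  -- A is nonnegative on the closure of the cone
  have hA_nonneg : ∀ y ∈ closure (omg mul st), 0 ≤ A y := by
    have hsub : omg mul st ⊆ {y | 0 ≤ A y} := by
      rintro y ⟨s, hs, -, rfl⟩
      show 0 ≤ A (mul s s)
      have : A (mul s s) = Q s := by rw [hQdef]; simp only [hs]
      rw [this]
      rcases eq_or_ne s 0 with rfl | h0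
      · simp [hQdef]
      · exact le_of_lt (hQpos s h0)
    intro y hy
    exact closure_minimal hsub (isClosed_le continuous_const hA_cont) hy
  have hAa : A a = 0 := by
    have h1 := hA_nonneg a ha
    have h2 := hA_nonneg _ hna
    rw [map_neg] at h2
    linarith
  -- sequential argument
  obtain ⟨y, hy, hylim⟩ := mem_closure_iff_seq_limit.mp ha
  choose s hs_st hs_bij hs_sq using hy
  have hfy : ∀ n, A (y n) = Q (s n) := by
    intro n
    rw [hs_sq n, hQdef]
    simp only [hs_st]
  have hlimA : Filter.Tendsto (fun n => A (y n)) Filter.atTop (nhds 0) := by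
    have := (hA_cont.tendsto a).comp hylim
    rwa [hAa] at this
  have hQs : Filter.Tendsto (fun n => Q (s n)) Filter.atTop (nhds 0) :=
    hlimA.congr fun n => hfy n
  have h3 : Filter.Tendsto (fun n => c * ‖s n‖ ^ 2) Filter.atTop (nhds 0) :=
    squeeze_zero (fun n => by positivity) (fun n => hbound (s n)) hQs
  have h4 : Filter.Tendsto (fun n => ‖s n‖ ^ 2) Filter.atTop (nhds 0) := by
    have := h3.const_mul c⁻¹
    simp only [mul_zero] at this
    refine this.congr fun n => ?_
    field_simp
  have hns : Filter.Tendsto (fun n => ‖s n‖) Filter.atTop (nhds 0) := by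
    have h5 := (Real.continuous_sqrt.tendsto 0).comp h4
    have heq : (fun n => Real.sqrt (‖s n‖ ^ 2)) = fun n => ‖s n‖ :=
      funext fun n => Real.sqrt_sq (norm_nonneg _)
    rw [show Real.sqrt 0 = 0 from Real.sqrt_zero] at h5
    exact heq ▸ h5
  have hs0 : Filter.Tendsto s Filter.atTop (nhds 0) :=
    tendsto_zero_iff_norm_tendsto_zero.mpr hns
  have hmul0 : Filter.Tendsto (fun n => mul (s n) (s n)) Filter.atTop (nhds 0) := by
    have := (hsq_cont.tendsto 0).comp hs0
    simpa [Function.comp_def] using this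
  have hy0 : Filter.Tendsto y Filter.atTop (nhds 0) :=
    hmul0.congr fun n => (hs_sq n).symm
  exact tendsto_nhds_unique hylim hy0

theorem stmt5 {V : Type} [NormedAddCommGroup V] [NormedSpace ℝ V] [FiniteDimensional ℝ V]
    (mul : V →ₗ[ℝ] V →ₗ[ℝ] V) (e : V)
    (hcomm : ∀ x y : V, mul x y = mul y x)
    (hunit : ∀ x : V, mul e x = x)
    (hjordan : ∀ x y : V, mul x (mul (mul x x) y) = mul (mul x x) (mul x y))
    (st : V →ₗ[ℝ] V)
    (hst_invol : ∀ x : V, st (st x) = x)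
    (hst_mul : ∀ x y : V, st (mul x y) = mul (st x) (st y))
    (hα_nondeg : ∀ x : V, (∀ y : V, αf mul x y = 0) → x = 0)
    (hα_pos : ∀ x : V, st x = x → x ≠ 0 → 0 < αf mul x x)
    (hα_neg : ∀ x : V, st x = -x → x ≠ 0 → αf mul x x < 0)
    (M : V ≃ₗ[ℝ] V)
    (hMstar : ∀ x : V, st (M (st x)) = M x)
    (hMΩ : ⇑M '' omg mul st = omg mul st)
    (p : V →ₗ[ℝ] V)
    (hp_plus : ∀ v : V, st (p v) = p v)
    (hp_minus : ∀ v : V, st (v - p v) = -(v - p v))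
    (v : V)
    (hv : p v ∈ closure (omg mul st))
    (hv' : p (-(M.symm v)) ∈ closure (omg mul st)) :
    p v = 0 := by
  have hMcont : Continuous (⇑M) := by
    have := M.toLinearMap.continuous_of_finiteDimensional
    simpa using this
  -- st commutes with M.symm
  have hM_st : ∀ z : V, M (st z) = st (M z) := by
    intro z
    have := congrArg st (hMstar z)
    rwa [hst_invol] at this
  have hMsymm_st : ∀ x : V, st (M.symm x) = M.symm (st x) := by
    intro x
    apply M.injective
    rw [hM_st, M.apply_symm_apply, M.apply_symm_apply]
  -- p fixes V⁺ and kills V⁻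
  have hneg_self : ∀ x : V, x = -x → x = 0 := by
    intro x hx
    have h2 : (2 : ℝ) • x = 0 := by
      rw [two_smul]
      nth_rewrite 2 [hx]
      exact add_neg_cancel x
    have := smul_eq_zero.mp h2
    exact this.resolve_left (by norm_num)
  have hplus : ∀ u : V, st u = u → p u = u := by
    intro u hu
    have h1 := hp_minus u
    have h2 : st (u - p u) = u - p u := by rw [map_sub, hu, hp_plus]
    rw [h2] at h1
    have h3 : u - p u = 0 := hneg_self _ h1
    have := sub_eq_zero.mp h3
    exact this.symm
  have hminus : ∀ u : V, st u = -u → p u = 0 := by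
    intro u hu
    have h1 := hp_minus u
    have h2 : st (u - p u) = -u - p u := by rw [map_sub, hu, hp_plus]
    rw [h2, neg_sub] at h1
    -- h1 : -u - p u = p u - u
    have h4 : p u + p u = (p u - u) - (-u - p u) := by abel
    rw [← h1, sub_self] at h4
    have h5 : p u = -(p u) := by
      have := eq_neg_of_add_eq_zero_left h4
      exact this
    exact hneg_self _ h5
  -- compute p(-(M.symm v))
  have hb : p (-(M.symm v)) = -(M.symm (p v)) := by
    have hdecomp : -(M.symm v) = -(M.symm (p v)) + -(M.symm (v - p v)) := by
      have h : M.symm v = M.symm (p v) + M.symm (v - p v) := by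
        rw [← map_add]
        congr 1
        abel
      rw [h]; abel
    rw [hdecomp, map_add]
    have e1 : p (-(M.symm (p v))) = -(M.symm (p v)) := by
      apply hplus
      rw [map_neg, hMsymm_st, hp_plus]
    have e2 : p (-(M.symm (v - p v))) = 0 := by
      apply hminus
      rw [map_neg, hMsymm_st, hp_minus]; simp
    rw [e1, e2, add_zero]
  -- M maps the closure of the cone into itself
  have him : ∀ z ∈ closure (omg mul st), M z ∈ closure (omg mul st) := by
    intro z hz
    have h1 : M z ∈ ⇑M '' closure (omg mul st) := ⟨z, hz, rfl⟩
    have h2 : ⇑M '' closure (omg mul st) ⊆ closure (⇑M '' omg mul st) :=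
      image_closure_subset_closure_image hMcont
    rw [hMΩ] at h2
    exact h2 h1
  have hna : -(p v) ∈ closure (omg mul st) := by
    have h1 : M (-(M.symm (p v))) = -(p v) := by simp
    rw [hb] at hv'
    have := him _ hv'
    rwa [h1] at this
  exact aux_closure_neg_eq_zero mul hcomm st hst_invol hst_mul hα_pos hα_neg (p v) hv hna
end
end

section
/- For g ∈ GL(V), the following are equivalent: (a) g{x,y,z} = {gx,gy,gz} for all x,y,z ∈ V and ge = e; (b) g(xy) = (gx)(gy) for all x,y ∈ V and g⋆ = g. -/
noncomputable section
open scoped Classical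

open Function

variable {V : Type} [AddCommGroup V] [Module ℝ V]

/-- The Jordan triple product `{x,y,z} = (xy⋆)z + x(y⋆z) − y⋆(xz)`. -/
def trip (mul : V →ₗ[ℝ] V →ₗ[ℝ] V) (st : V →ₗ[ℝ] V) (x y z : V) : V :=
  mul (mul x (st y)) z + mul x (mul (st y) z) - mul (st y) (mul x z)

theorem stmt6 {V : Type} [AddCommGroup V] [Module ℝ V] [FiniteDimensional ℝ V]
    (mul : V →ₗ[ℝ] V →ₗ[ℝ] V) (e : V)
    (hcomm : ∀ x y : V, mul x y = mul y x)
    (hunit : ∀ x : V, mul e x = x)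
    (hjordan : ∀ x y : V, mul x (mul (mul x x) y) = mul (mul x x) (mul x y))
    (st : V →ₗ[ℝ] V)
    (hst_invol : ∀ x : V, st (st x) = x)
    (hst_mul : ∀ x y : V, st (mul x y) = mul (st x) (st y))
    (hα_nondeg : ∀ x : V, (∀ y : V, αf mul x y = 0) → x = 0)
    (hα_pos : ∀ x : V, st x = x → x ≠ 0 → 0 < αf mul x x)
    (hα_neg : ∀ x : V, st x = -x → x ≠ 0 → αf mul x x < 0)
    (g : V →ₗ[ℝ] V) (hg : Function.Bijective g) :
    ((∀ x y z : V, g (trip mul st x y z) = trip mul st (g x) (g y) (g z)) ∧ g e = e) ↔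
      ((∀ x y : V, g (mul x y) = mul (g x) (g y)) ∧ ∀ x : V, st (g (st x)) = g x) := by
  have hste : st e = e := by
    have h1 : ∀ y : V, mul (st e) y = y := by
      intro y
      have h := hst_mul e (st y)
      rw [hunit, hst_invol] at h
      exact h.symm
    calc st e = mul e (st e) := (hunit _).symm
      _ = mul (st e) e := hcomm _ _
      _ = e := h1 e
  constructor
  · rintro ⟨htrip, hge⟩
    have key : ∀ a b : V, trip mul st a e b = mul a b := by
      intro a b
      simp only [trip, hste]
      rw [hcomm a e, hunit, hunit, hunit]
      abel
    have key2 : ∀ a : V, trip mul st e a e = st a := by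
      intro a
      simp only [trip, hunit]
      rw [hcomm (st a) e, hunit]
      abel
    have hmul : ∀ x z : V, g (mul x z) = mul (g x) (g z) := by
      intro x z
      rw [← key x z, htrip, hge, key]
    have hgst : ∀ y : V, g (st y) = st (g y) := by
      intro y
      rw [← key2 y, htrip, hge, key2]
    refine ⟨hmul, fun x => ?_⟩
    rw [hgst, hst_invol]
  · rintro ⟨hmul, hstar⟩
    have h1 : ∀ y : V, mul (g e) y = y := by
      intro y
      obtain ⟨x, rfl⟩ := hg.2 y
      rw [← hmul, hunit]
    have hge : g e = e := by
      calc g e = mul e (g e) := (hunit _).symm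
        _ = mul (g e) e := hcomm _ _
        _ = e := h1 e
    have hgst : ∀ y : V, g (st y) = st (g y) := by
      intro y
      calc g (st y) = st (st (g (st y))) := (hst_invol _).symm
        _ = st (g y) := by rw [hstar]
    refine ⟨fun x y z => ?_, hge⟩
    simp only [trip, map_add, map_sub, hmul, hgst]
end
end

section
/- If g ∈ GL(V) satisfies g{x,y,z} = {gx,gy,gz} for all x,y,z ∈ V, then ge is invertible and (ge)⁻¹ = (ge)⋆. -/
noncomputable section
open scoped Classical

open Function

variable {V : Type} [AddCommGroup V] [Module ℝ V]

theorem stmt8 {V : Type} [AddCommGroup V] [Module ℝ V] [FiniteDimensional ℝ V]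
    (mul : V →ₗ[ℝ] V →ₗ[ℝ] V) (e : V)
    (hcomm : ∀ x y : V, mul x y = mul y x)
    (hunit : ∀ x : V, mul e x = x)
    (hjordan : ∀ x y : V, mul x (mul (mul x x) y) = mul (mul x x) (mul x y))
    (st : V →ₗ[ℝ] V)
    (hst_invol : ∀ x : V, st (st x) = x)
    (hst_mul : ∀ x y : V, st (mul x y) = mul (st x) (st y))
    (hα_nondeg : ∀ x : V, (∀ y : V, αf mul x y = 0) → x = 0)
    (hα_pos : ∀ x : V, st x = x → x ≠ 0 → 0 < αf mul x x)
    (hα_neg : ∀ x : V, st x = -x → x ≠ 0 → αf mul x x < 0)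
    (g : V →ₗ[ℝ] V) (hg : Function.Bijective g)
    (htrip : ∀ x y z : V, g (trip mul st x y z) = trip mul st (g x) (g y) (g z)) :
    Function.Bijective (Pq mul (g e)) ∧ jinv mul (g e) = st (g e) := by
  -- st fixes the unit
  have he' : ∀ x, mul (st e) x = x := by
    intro x
    have h := hst_mul e (st x)
    rw [hunit, hst_invol] at h
    exact h.symm
  have he : st e = e := by
    have h1 := he' e
    rwa [hcomm, hunit] at h1
  -- key identity
  have key : ∀ y : V, g (st y) = Pq mul (g e) (st (g y)) := by
    intro y
    have h1 : trip mul st e y e = st y := by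
      simp only [trip, hunit, hcomm _ e, hunit]
      abel
    have hP : Pq mul (g e) (st (g y))
        = 2 • (mul (g e) (mul (g e) (st (g y)))) - mul (mul (g e) (g e)) (st (g y)) := rfl
    have h2 : trip mul st (g e) (g y) (g e) = Pq mul (g e) (st (g y)) := by
      rw [hP, two_smul]
      simp only [trip]
      rw [hcomm (mul (g e) (st (g y))) (g e), hcomm (st (g y)) (g e),
        hcomm (st (g y)) (mul (g e) (g e))]
    have h3 := htrip e y e
    rw [h1, h2] at h3
    exact h3
  have hsurj : Surjective (Pq mul (g e)) := by
    intro z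
    obtain ⟨z', hz'⟩ := hg.2 z
    refine ⟨st (g (st z')), ?_⟩
    have := key (st z')
    rw [hst_invol, hz'] at this
    exact this.symm
  have hbij : Function.Bijective (Pq mul (g e)) :=
    ⟨(LinearMap.injective_iff_surjective).mpr hsurj, hsurj⟩
  refine ⟨hbij, ?_⟩
  rw [jinv, dif_pos hbij]
  rw [LinearEquiv.symm_apply_eq]
  have h4 := key e
  rw [he] at h4
  rw [LinearEquiv.ofBijective_apply]
  exact h4
end
end

section
/- The bilinear form β(x,y) := Tr(x□y), where x□y := L(xy⋆) + L(x)∘L(y⋆) − L(y⋆)∘L(x), satisfies β(x,y) = α(x,y⋆) for all x,y ∈ V, is symmetric, and is positive definite on V. -/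
noncomputable section
open scoped Classical

open Function

variable {V : Type} [AddCommGroup V] [Module ℝ V]

theorem stmt9 {V : Type} [AddCommGroup V] [Module ℝ V] [FiniteDimensional ℝ V]
    (mul : V →ₗ[ℝ] V →ₗ[ℝ] V) (e : V)
    (hcomm : ∀ x y : V, mul x y = mul y x)
    (hunit : ∀ x : V, mul e x = x)
    (hjordan : ∀ x y : V, mul x (mul (mul x x) y) = mul (mul x x) (mul x y))
    (st : V →ₗ[ℝ] V)
    (hst_invol : ∀ x : V, st (st x) = x)
    (hst_mul : ∀ x y : V, st (mul x y) = mul (st x) (st y))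
    (hα_nondeg : ∀ x : V, (∀ y : V, αf mul x y = 0) → x = 0)
    (hα_pos : ∀ x : V, st x = x → x ≠ 0 → 0 < αf mul x x)
    (hα_neg : ∀ x : V, st x = -x → x ≠ 0 → αf mul x x < 0)
 :
    (∀ x y : V,
      LinearMap.trace ℝ V (mul (mul x (st y)) + mul x ∘ₗ mul (st y) - mul (st y) ∘ₗ mul x) =
        αf mul x (st y)) ∧
    (∀ x y : V,
      LinearMap.trace ℝ V (mul (mul x (st y)) + mul x ∘ₗ mul (st y) - mul (st y) ∘ₗ mul x) =
        LinearMap.trace ℝ V (mul (mul y (st x)) + mul y ∘ₗ mul (st x) - mul (st x) ∘ₗ mul y)) ∧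
    (∀ x : V, x ≠ 0 →
      0 < LinearMap.trace ℝ V
        (mul (mul x (st x)) + mul x ∘ₗ mul (st x) - mul (st x) ∘ₗ mul x)) := by

  have h1 : ∀ x y : V,
      LinearMap.trace ℝ V (mul (mul x (st y)) + mul x ∘ₗ mul (st y) - mul (st y) ∘ₗ mul x) =
        αf mul x (st y) := by
    intro x y
    rw [map_sub, map_add, LinearMap.trace_comp_comm']
    simp [αf]
  have hstst : st ∘ₗ st = LinearMap.id := by
    ext w; simp [hst_invol]
  have htr_st : ∀ z : V, LinearMap.trace ℝ V (mul (st z)) = LinearMap.trace ℝ V (mul z) := by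
    intro z
    have hL : mul (st z) = st ∘ₗ mul z ∘ₗ st := by
      ext w
      simp only [LinearMap.comp_apply]
      rw [hst_mul z (st w), hst_invol]
    rw [hL, LinearMap.trace_comp_comm', LinearMap.comp_assoc, hstst, LinearMap.comp_id]
  have hsym : ∀ x y : V, αf mul x (st y) = αf mul y (st x) := by
    intro x y
    have h2 : st (mul x (st y)) = mul y (st x) := by
      rw [hst_mul, hst_invol, hcomm]
    unfold αf
    rw [← h2, htr_st]
  refine ⟨h1, ?_, ?_⟩
  · intro x y
    rw [h1, h1, hsym]
  · intro x hx
    rw [h1 x x]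
    set a := (2:ℝ)⁻¹ • (x + st x) with ha
    set b := (2:ℝ)⁻¹ • (x - st x) with hb
    have hab : a + b = x := by rw [ha, hb]; module
    have hst_ab : a - b = st x := by rw [ha, hb]; module
    have hsta : st a = a := by
      rw [ha]
      simp only [map_smul, map_add, hst_invol]
      rw [add_comm]
    have hstb : st b = -b := by
      have : st b = (2:ℝ)⁻¹ • (st x - x) := by
        rw [hb]; simp only [map_smul, map_sub, hst_invol]
      rw [this, hb]; module
    have key : αf mul x (st x) = αf mul a a - αf mul b b := by
      rw [← hst_ab, ← hab]
      simp only [αf, map_add, map_sub, LinearMap.add_apply, LinearMap.sub_apply]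
      rw [hcomm b a]
      ring
    have hzero : ∀ u : V, u = 0 → αf mul u u = 0 := by
      intro u hu; simp [hu, αf]
    have haa : 0 ≤ αf mul a a := by
      by_cases h : a = 0
      · rw [hzero a h]
      · exact le_of_lt (hα_pos a hsta h)
    have hbb : αf mul b b ≤ 0 := by
      by_cases h : b = 0
      · rw [hzero b h]
      · exact le_of_lt (hα_neg b hstb h)
    have hone : a ≠ 0 ∨ b ≠ 0 := by
      by_contra h
      push_neg at h
      exact hx (by rw [← hab, h.1, h.2, add_zero])
    rw [key]
    rcases hone with h | h
    · have := hα_pos a hsta h; linarith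
    · have := hα_neg b hstb h; linarith
end
end

section
/- For g ∈ GL(V), the following are equivalent: (a) P(gx) = g ∘ P(x) ∘ ᵗg for all x ∈ V; (b) Q(gx) = g ∘ Q(x) ∘ ᵗ(g⋆) for all x ∈ V, where Q(x) is the linear map y ↦ P(x)(y⋆). In other words, Str(V') = Str(V). -/
noncomputable section
open scoped Classical

open Function

variable {V : Type} [AddCommGroup V] [Module ℝ V]

theorem stmt12 {V : Type} [AddCommGroup V] [Module ℝ V] [FiniteDimensional ℝ V]
    (mul : V →ₗ[ℝ] V →ₗ[ℝ] V) (e : V)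
    (hcomm : ∀ x y : V, mul x y = mul y x)
    (hunit : ∀ x : V, mul e x = x)
    (hjordan : ∀ x y : V, mul x (mul (mul x x) y) = mul (mul x x) (mul x y))
    (st : V →ₗ[ℝ] V)
    (hst_invol : ∀ x : V, st (st x) = x)
    (hst_mul : ∀ x y : V, st (mul x y) = mul (st x) (st y))
    (hα_nondeg : ∀ x : V, (∀ y : V, αf mul x y = 0) → x = 0)
    (hα_pos : ∀ x : V, st x = x → x ≠ 0 → 0 < αf mul x x)
    (hα_neg : ∀ x : V, st x = -x → x ≠ 0 → αf mul x x < 0)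
    (g : V →ₗ[ℝ] V) (hg : Function.Bijective g)
    (tg : V →ₗ[ℝ] V)
    (htg : ∀ x y : V, αf mul (g x) y = αf mul x (tg y))
    (tgs : V →ₗ[ℝ] V)
    (htgs : ∀ x y : V, αf mul (st (g (st x))) y = αf mul x (tgs y)) :
    (∀ x y : V, Pq mul (g x) y = g (Pq mul x (tg y))) ↔
      ∀ x y : V, Pq mul (g x) (st y) = g (Pq mul x (st (tgs y))) := by
  -- st-invariance of α
  have hmulst : ∀ z : V, mul (st z) = st ∘ₗ mul z ∘ₗ st := by
    intro z; ext w
    simp only [LinearMap.comp_apply]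
    rw [hst_mul, hst_invol]
  have hinv : ∀ a b : V, αf mul (st a) (st b) = αf mul a b := by
    intro a b
    unfold αf
    rw [← hst_mul, hmulst]
    rw [show (st ∘ₗ mul (mul a b) ∘ₗ st) = st ∘ₗ (mul (mul a b) ∘ₗ st) from rfl]
    rw [LinearMap.trace_comp_comm']
    have h : (mul (mul a b) ∘ₗ st) ∘ₗ st = mul (mul a b) := by
      ext w; simp only [LinearMap.comp_apply]; rw [hst_invol]
    rw [h]
  have hsymm : ∀ a b : V, αf mul a b = αf mul b a := by
    intro a b; unfold αf; rw [hcomm]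
  -- key identity: tgs = st ∘ tg ∘ st
  have key : ∀ y : V, tgs y = st (tg (st y)) := by
    intro y
    have h0 : ∀ w : V, αf mul w (tgs y) = αf mul w (st (tg (st y))) := by
      intro w
      have h1 : αf mul w (tgs y) = αf mul (st (g (st w))) y := (htgs w y).symm
      have h2 : αf mul (st (g (st w))) y = αf mul (g (st w)) (st y) := by
        have h := hinv (g (st w)) (st y); rw [hst_invol] at h; exact h
      have h3 : αf mul (g (st w)) (st y) = αf mul (st w) (tg (st y)) := htg _ _
      have h4 : αf mul (st w) (tg (st y)) = αf mul w (st (tg (st y))) := by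
        have h := hinv w (st (tg (st y))); rw [hst_invol] at h; exact h
      rw [h1, h2, h3, h4]
    have hd : ∀ w : V, αf mul (tgs y - st (tg (st y))) w = 0 := by
      intro w
      rw [hsymm]
      have hlin : αf mul w (tgs y - st (tg (st y)))
          = αf mul w (tgs y) - αf mul w (st (tg (st y))) := by
        unfold αf; rw [map_sub, map_sub, map_sub]
      rw [hlin, h0, sub_self]
    exact sub_eq_zero.mp (hα_nondeg _ hd)
  constructor
  · intro h x y
    rw [h x (st y)]
    congr 1
    rw [key y, hst_invol]
  · intro h x y
    have h1 := h x (st y)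
    rw [hst_invol] at h1
    rw [h1]
    congr 1
    rw [key (st y), hst_invol, hst_invol]
end
end

section
/- For g ∈ GL(V), the following are equivalent: (a) g{x,y,z} = {gx,gy,gz} for all x,y,z ∈ V; (b) Q(gx) = g ∘ Q(x) ∘ ᵗ(g⋆) for all x ∈ V, where Q(x)y := P(x)(y⋆), and β(gx, gy) = β(x,y) for all x,y ∈ V, where β(x,y) := α(x, y⋆). In other words, Aut(V') = Str(V') ∩ O(V,β). -/
noncomputable section
open scoped Classical

open Function

variable {V : Type} [AddCommGroup V] [Module ℝ V]

/-- The "box" operator `x □ y : z ↦ {x,y,z}` as a linear map. -/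
def Bop (mul : V →ₗ[ℝ] V →ₗ[ℝ] V) (st : V →ₗ[ℝ] V) (x y : V) : V →ₗ[ℝ] V :=
  mul (mul x (st y)) + (mul x ∘ₗ mul (st y)) - (mul (st y) ∘ₗ mul x)

lemma Bop_apply (mul : V →ₗ[ℝ] V →ₗ[ℝ] V) (st : V →ₗ[ℝ] V) (x y z : V) :
    Bop mul st x y z = trip mul st x y z := by
  simp [Bop, trip]

lemma trace_Bop [FiniteDimensional ℝ V] (mul : V →ₗ[ℝ] V →ₗ[ℝ] V) (st : V →ₗ[ℝ] V) (x y : V) :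
    LinearMap.trace ℝ V (Bop mul st x y) = αf mul x (st y) := by
  simp only [Bop, map_add, map_sub, αf]
  rw [LinearMap.trace_comp_comm']
  ring

lemma trip_self (mul : V →ₗ[ℝ] V →ₗ[ℝ] V) (hcomm : ∀ x y : V, mul x y = mul y x)
    (st : V →ₗ[ℝ] V) (x y : V) : trip mul st x y x = Pq mul x (st y) := by
  simp only [trip, Pq, LinearMap.sub_apply, LinearMap.smul_apply, LinearMap.comp_apply, two_smul]
  rw [hcomm (mul x (st y)) x, hcomm (st y) x, hcomm (st y) (mul x x)]
  simp [LinearMap.add_apply]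

lemma trip_symm (mul : V →ₗ[ℝ] V →ₗ[ℝ] V) (hcomm : ∀ x y : V, mul x y = mul y x)
    (st : V →ₗ[ℝ] V) (x y z : V) : trip mul st x y z = trip mul st z y x := by
  simp only [trip]
  rw [hcomm (mul x (st y)) z, hcomm x (st y), hcomm x (mul (st y) z), hcomm (st y) z,
    hcomm x z]
  abel

lemma trip_add_left (mul : V →ₗ[ℝ] V →ₗ[ℝ] V) (st : V →ₗ[ℝ] V) (a b y c : V) :
    trip mul st (a + b) y c = trip mul st a y c + trip mul st b y c := by
  simp only [trip, map_add, LinearMap.add_apply]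
  abel

lemma trip_add_right (mul : V →ₗ[ℝ] V →ₗ[ℝ] V) (st : V →ₗ[ℝ] V) (a y c d : V) :
    trip mul st a y (c + d) = trip mul st a y c + trip mul st a y d := by
  simp only [trip, map_add, LinearMap.add_apply]
  abel

lemma trip_expand (mul : V →ₗ[ℝ] V →ₗ[ℝ] V) (hcomm : ∀ x y : V, mul x y = mul y x)
    (st : V →ₗ[ℝ] V) (a b y : V) :
    trip mul st (a + b) y (a + b)
      = trip mul st a y a + trip mul st b y b + (trip mul st a y b + trip mul st a y b) := by
  rw [trip_add_left, trip_add_right, trip_add_right, trip_symm mul hcomm st b y a]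
  abel

theorem stmt13 {V : Type} [AddCommGroup V] [Module ℝ V] [FiniteDimensional ℝ V]
    (mul : V →ₗ[ℝ] V →ₗ[ℝ] V) (e : V)
    (hcomm : ∀ x y : V, mul x y = mul y x)
    (hunit : ∀ x : V, mul e x = x)
    (hjordan : ∀ x y : V, mul x (mul (mul x x) y) = mul (mul x x) (mul x y))
    (st : V →ₗ[ℝ] V)
    (hst_invol : ∀ x : V, st (st x) = x)
    (hst_mul : ∀ x y : V, st (mul x y) = mul (st x) (st y))
    (hα_nondeg : ∀ x : V, (∀ y : V, αf mul x y = 0) → x = 0)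
    (hα_pos : ∀ x : V, st x = x → x ≠ 0 → 0 < αf mul x x)
    (hα_neg : ∀ x : V, st x = -x → x ≠ 0 → αf mul x x < 0)
    (g : V →ₗ[ℝ] V) (hg : Function.Bijective g)
    (tgs : V →ₗ[ℝ] V)
    (htgs : ∀ x y : V, αf mul (st (g (st x))) y = αf mul x (tgs y)) :
    (∀ x y z : V, g (trip mul st x y z) = trip mul st (g x) (g y) (g z)) ↔
      ((∀ x y : V, Pq mul (g x) (st y) = g (Pq mul x (st (tgs y)))) ∧
        ∀ x y : V, αf mul (g x) (st (g y)) = αf mul x (st y)) := by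
  -- symmetry of α
  have hα_symm : ∀ x y : V, αf mul x y = αf mul y x := by
    intro x y; unfold αf; rw [hcomm x y]
  -- nondegeneracy in the second argument
  have hnd2 : ∀ u w : V, (∀ x : V, αf mul x u = αf mul x w) → u = w := by
    intro u w h
    have h0 : ∀ y : V, αf mul (u - w) y = 0 := by
      intro y
      have : αf mul (u - w) y = αf mul y u - αf mul y w := by
        rw [hα_symm]
        simp [αf, map_sub]
      rw [this, h y, sub_self]
    have := hα_nondeg (u - w) h0
    exact sub_eq_zero.mp this
  -- β-invariance implies tgs ∘ g = id and g ∘ tgs = id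
  have key_tg : (∀ x y : V, αf mul (g x) (st (g y)) = αf mul x (st y)) →
      (∀ v : V, tgs (g v) = v) ∧ (∀ y : V, g (tgs y) = y) := by
    intro hβ
    have h1 : ∀ v : V, tgs (g v) = v := by
      intro v
      refine hnd2 _ _ fun x => ?_
      rw [← htgs x (g v)]
      calc αf mul (st (g (st x))) (g v)
          = αf mul (g v) (st (g (st x))) := hα_symm _ _
        _ = αf mul v (st (st x)) := hβ v (st x)
        _ = αf mul v x := by rw [hst_invol]
        _ = αf mul x v := hα_symm _ _
    refine ⟨h1, fun y => ?_⟩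
    obtain ⟨v, rfl⟩ := hg.2 y
    rw [h1]
  constructor
  · -- forward direction
    intro htrip
    -- β-invariance via traces of box operators
    have hβ : ∀ x y : V, αf mul (g x) (st (g y)) = αf mul x (st y) := by
      intro x y
      set ge := LinearEquiv.ofBijective g hg with hge
      have hBg : Bop mul st (g x) (g y) = (g ∘ₗ Bop mul st x y) ∘ₗ (ge.symm : V →ₗ[ℝ] V) := by
        ext z
        simp only [LinearMap.comp_apply, LinearEquiv.coe_coe]
        conv_lhs => rw [show z = g (ge.symm z) from (ge.apply_symm_apply z).symm]
        rw [Bop_apply, Bop_apply, ← htrip]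
      have htr : LinearMap.trace ℝ V (Bop mul st (g x) (g y))
          = LinearMap.trace ℝ V (Bop mul st x y) := by
        rw [hBg, LinearMap.trace_comp_comm']
        congr 1
        ext z
        simp [ge]
      rw [trace_Bop, trace_Bop] at htr
      exact htr
    obtain ⟨htg, hgt⟩ := key_tg hβ
    refine ⟨fun x y => ?_, hβ⟩
    have hQ : ∀ x w : V, g (Pq mul x (st w)) = Pq mul (g x) (st (g w)) := by
      intro x w
      rw [← trip_self mul hcomm st x w, ← trip_self mul hcomm st (g x) (g w)]
      exact htrip x w x
    rw [hQ x (tgs y), hgt y]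
  · -- backward direction
    rintro ⟨hQ, hβ⟩ x y z
    obtain ⟨htg, hgt⟩ := key_tg hβ
    -- the diagonal case
    have hQg : ∀ a y : V, g (trip mul st a y a) = trip mul st (g a) (g y) (g a) := by
      intro a y
      rw [trip_self mul hcomm st a y, trip_self mul hcomm st (g a) (g y)]
      have := hQ a (g y)
      rw [htg y] at this
      exact this.symm
    -- polarization
    have h1 := hQg (x + z) y
    rw [trip_expand mul hcomm st x z y] at h1
    simp only [map_add] at h1
    rw [trip_expand mul hcomm st (g x) (g z) (g y), hQg x y, hQg z y] at h1
    have h2 := add_left_cancel h1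
    have h3 : (2 : ℝ) • g (trip mul st x y z) = (2 : ℝ) • trip mul st (g x) (g y) (g z) := by
      rw [two_smul, two_smul]; exact h2
    exact smul_right_injective V two_ne_zero h3
end
end

section
/- Let n ≥ 1 and let x be a real symmetric n×n matrix. Then x is positive definite or −x is positive definite if and only if trace(x·y·x·y) > 0 for every nonzero real symmetric n×n matrix y (products being ordinary matrix products), i.e. the quadratic form y ↦ trace((P(x)y)·y) with P(x)y := xyx is positive definite on the space of symmetric matrices. -/
open Matrix

lemma myVecMulVec_mulVec {n : ℕ} (v w u : Fin n → ℝ) :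
    Matrix.vecMulVec v w *ᵥ u = (w ⬝ᵥ u) • v := by
  funext i
  simp only [Matrix.mulVec, dotProduct, Matrix.vecMulVec_apply, Pi.smul_apply,
    smul_eq_mul, Finset.sum_mul]
  exact Finset.sum_congr rfl fun k _ => by ring

lemma myTrace_mul_vecMulVec {n : ℕ} (M : Matrix (Fin n) (Fin n) ℝ) (v w : Fin n → ℝ) :
    (M * Matrix.vecMulVec v w).trace = w ⬝ᵥ M *ᵥ v := by
  simp only [Matrix.trace, Matrix.diag, Matrix.mul_apply, Matrix.vecMulVec_apply,
    dotProduct, Matrix.mulVec, Finset.mul_sum]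
  exact Finset.sum_congr rfl fun i _ => Finset.sum_congr rfl fun k _ => by ring

lemma myTrace_sq_pos {n : ℕ} {m : Matrix (Fin n) (Fin n) ℝ} (hm : m.IsSymm) (h0 : m ≠ 0) :
    0 < (m * m).trace := by
  have key : (m * m).trace = ∑ i, ∑ j, (m i j) ^ 2 := by
    simp only [Matrix.trace, Matrix.diag, Matrix.mul_apply]
    refine Finset.sum_congr rfl fun i _ => Finset.sum_congr rfl fun j _ => ?_
    rw [hm.apply i j, sq]
  rw [key]
  obtain ⟨i, j, hij⟩ : ∃ i j, m i j ≠ 0 := by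
    by_contra h
    push_neg at h
    exact h0 (by ext i j; simp [h])
  have h1 : (0:ℝ) < ∑ j', (m i j') ^ 2 := by
    have : (0:ℝ) < m i j ^ 2 := by positivity
    exact Finset.sum_pos' (fun k _ => sq_nonneg _) ⟨j, Finset.mem_univ j, this⟩
  exact Finset.sum_pos' (fun k _ => Finset.sum_nonneg fun l _ => sq_nonneg _)
    ⟨i, Finset.mem_univ i, h1⟩

open scoped MatrixOrder in
lemma myForward_pd {n : ℕ} {x : Matrix (Fin n) (Fin n) ℝ} (hpd : x.PosDef)
    (y : Matrix (Fin n) (Fin n) ℝ) (hy : y.IsSymm) (hy0 : y ≠ 0) :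
    0 < (x * y * x * y).trace := by
  obtain ⟨s, hssymm, hsunit, hss⟩ :
      ∃ s : Matrix (Fin n) (Fin n) ℝ, s.IsSymm ∧ IsUnit s.det ∧ s * s = x := by
    refine ⟨CFC.sqrt x, ?_, ?_, CFC.sqrt_mul_sqrt_self x hpd.posSemidef.nonneg⟩
    · have hsherm : (CFC.sqrt x).IsHermitian :=
        (Matrix.nonneg_iff_posSemidef.mp (CFC.sqrt_nonneg x)).1
      rwa [Matrix.IsHermitian, Matrix.conjTranspose_eq_transpose_of_trivial] at hsherm
    · have hdx : IsUnit x.det := hpd.det_pos.ne'.isUnit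
      rw [← CFC.sqrt_mul_sqrt_self x hpd.posSemidef.nonneg, Matrix.det_mul] at hdx
      exact (IsUnit.mul_iff.mp hdx).1
  set m := s * y * s with hm
  have hmsymm : m.IsSymm := by
    rw [hm, Matrix.IsSymm, Matrix.transpose_mul, Matrix.transpose_mul, hssymm.eq, hy.eq,
      mul_assoc]
  have hm0 : m ≠ 0 := by
    intro h
    apply hy0
    have : s⁻¹ * (s * y * s) * s⁻¹ = s⁻¹ * 0 * s⁻¹ := by rw [← h]
    rwa [Matrix.mul_zero, Matrix.zero_mul, ← mul_assoc, ← mul_assoc,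
      Matrix.nonsing_inv_mul _ hsunit, Matrix.one_mul, mul_assoc,
      Matrix.mul_nonsing_inv _ hsunit, Matrix.mul_one] at this
  have htr : (x * y * x * y).trace = (m * m).trace := by
    rw [← hss, hm]
    rw [show s * s * y * (s * s) * y = s * (s * y * s * (s * y)) by
      simp only [Matrix.mul_assoc]]
    rw [Matrix.trace_mul_comm]
    congr 1
    simp only [Matrix.mul_assoc]
  rw [htr]
  exact myTrace_sq_pos hmsymm hm0

theorem stmt17 {n : ℕ} (hn : 1 ≤ n) (x : Matrix (Fin n) (Fin n) ℝ) (hx : x.IsSymm) :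
    (x.PosDef ∨ (-x).PosDef) ↔
      ∀ y : Matrix (Fin n) (Fin n) ℝ, y.IsSymm → y ≠ 0 → 0 < (x * y * x * y).trace := by
  constructor
  · rintro (h | h) y hy hy0
    · exact myForward_pd h y hy hy0
    · have := myForward_pd h y hy hy0
      simpa [neg_mul, mul_neg, neg_neg] using this
  · intro H
    have hherm : x.IsHermitian := by
      rwa [Matrix.IsHermitian, Matrix.conjTranspose_eq_transpose_of_trivial]
    have hq : ∀ v : Fin n → ℝ, v ≠ 0 → v ⬝ᵥ x *ᵥ v ≠ 0 := by
      intro v hv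
      have hysym : (Matrix.vecMulVec v v).IsSymm := by
        ext i j; simp [Matrix.vecMulVec_apply, mul_comm]
      have hy0 : Matrix.vecMulVec v v ≠ 0 := by
        intro h
        apply hv
        funext i
        obtain ⟨j, hj⟩ := Function.ne_iff.mp hv
        have := congrFun (congrFun h i) j
        simp only [Matrix.vecMulVec_apply, Matrix.zero_apply, mul_eq_zero] at this
        rcases this with h1 | h1
        · exact h1
        · exact absurd h1 hj
      have htr := H _ hysym hy0
      have h1 : (x * Matrix.vecMulVec v v * x) *ᵥ v = (v ⬝ᵥ x *ᵥ v) • (x *ᵥ v) := by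
        rw [← Matrix.mulVec_mulVec, ← Matrix.mulVec_mulVec, myVecMulVec_mulVec,
          Matrix.mulVec_smul]
      have key : (x * Matrix.vecMulVec v v * x * Matrix.vecMulVec v v).trace
          = (v ⬝ᵥ x *ᵥ v) ^ 2 := by
        rw [myTrace_mul_vecMulVec, h1, dotProduct_smul, smul_eq_mul, sq]
      rw [key] at htr
      intro h
      rw [h] at htr
      simp at htr
    by_contra hcon
    push_neg at hcon
    obtain ⟨h1, h2⟩ := hcon
    obtain ⟨u, hu0, hu⟩ : ∃ u : Fin n → ℝ, u ≠ 0 ∧ u ⬝ᵥ x *ᵥ u < 0 := by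
      by_contra h
      push_neg at h
      refine h1 (Matrix.PosDef.of_dotProduct_mulVec_pos hherm fun v hv => ?_)
      have := lt_of_le_of_ne (h v hv) (Ne.symm (hq v hv))
      simpa [star_trivial] using this
    obtain ⟨w, hw0, hw⟩ : ∃ w : Fin n → ℝ, w ≠ 0 ∧ 0 < w ⬝ᵥ x *ᵥ w := by
      by_contra h
      push_neg at h
      refine h2 (Matrix.PosDef.of_dotProduct_mulVec_pos ?_ fun v hv => ?_)
      · rw [Matrix.IsHermitian, Matrix.conjTranspose_neg,
          Matrix.conjTranspose_eq_transpose_of_trivial, hx.eq]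
      · have hle := h v hv
        have hne := hq v hv
        have heq : (star v) ⬝ᵥ (-x) *ᵥ v = -(v ⬝ᵥ x *ᵥ v) := by
          simp [Matrix.neg_mulVec, star_trivial]
        rw [heq]
        rcases lt_or_eq_of_le hle with h' | h'
        · linarith
        · exact absurd h' hne
    set f : ℝ → ℝ := fun t => ((1 - t) • u + t • w) ⬝ᵥ x *ᵥ ((1 - t) • u + t • w) with hf
    have hcont : ContinuousOn f (Set.Icc 0 1) := by
      apply Continuous.continuousOn
      unfold f
      continuity
    have hf0 : f 0 < 0 := by simpa [hf] using hu
    have hf1 : 0 < f 1 := by simpa [hf] using hw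
    obtain ⟨t, ht, hft⟩ := intermediate_value_Icc (by norm_num : (0:ℝ) ≤ 1) hcont
      (Set.mem_Icc.mpr ⟨le_of_lt hf0, le_of_lt hf1⟩)
    have hvz : (1 - t) • u + t • w ≠ 0 := by
      intro hz
      rcases eq_or_ne t 0 with rfl | ht0
      · simp at hz; exact hu0 hz
      · have hwval : w = ((t - 1) / t) • u := by
          funext i
          have hzi := congrFun hz i
          simp only [Pi.add_apply, Pi.smul_apply, smul_eq_mul, Pi.zero_apply] at hzi
          simp only [Pi.smul_apply, smul_eq_mul]
          rw [div_mul_eq_mul_div, eq_comm, div_eq_iff ht0]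
          linear_combination -hzi
        rw [hwval] at hw
        have heq2 : ((t - 1) / t) • u ⬝ᵥ x *ᵥ (((t - 1) / t) • u)
            = ((t - 1) / t) ^ 2 * (u ⬝ᵥ x *ᵥ u) := by
          rw [Matrix.mulVec_smul, dotProduct_smul, smul_dotProduct]
          simp only [smul_eq_mul]
          ring
        rw [heq2] at hw
        nlinarith [sq_nonneg ((t - 1) / t)]
    exact hq _ hvz hft
end

section
/- Let n ≥ 1 and let g be a linear bijection of the space M_n(ℝ) of real n×n matrices such that g(xᵀ) = g(x)ᵀ for all x and g(x)·y·g(x) = g(x·(ᵗg(y))·x) for all x,y ∈ M_n(ℝ) (ordinary matrix products), where ᵗg is the adjoint of g with respect to the bilinear form ⟨a,b⟩ = trace(ab). Let Ω ⊂ M_n(ℝ) be the set of symmetric positive definite matrices. Then gΩ = Ω or gΩ = −Ω. -/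
open Matrix

section Aux

variable {n : ℕ}

private lemma posDef_congr {w b : Matrix (Fin n) (Fin n) ℝ} (hw : w.PosDef) (hb : IsUnit b) :
    (b * w * bᴴ).PosDef := by
  refine Matrix.PosDef.of_dotProduct_mulVec_pos ?_ (fun x hx => ?_)
  · show (b * w * bᴴ)ᴴ = b * w * bᴴ
    simp only [conjTranspose_mul, conjTranspose_conjTranspose, hw.isHermitian.eq, mul_assoc]
  · have hbH : IsUnit bᴴ := by
      rw [← Matrix.star_eq_conjTranspose]; exact hb.star
    have hinj : Function.Injective (bᴴ).mulVec := Matrix.mulVec_injective_iff_isUnit.mpr hbH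
    have hy : bᴴ *ᵥ x ≠ 0 := by
      intro h
      exact hx (hinj (by rw [h, Matrix.mulVec_zero]))
    have : star x ⬝ᵥ ((b * w * bᴴ) *ᵥ x) = star (bᴴ *ᵥ x) ⬝ᵥ (w *ᵥ (bᴴ *ᵥ x)) := by
      rw [Matrix.star_mulVec, conjTranspose_conjTranspose, mul_assoc, ← Matrix.mulVec_mulVec,
        Matrix.dotProduct_mulVec, ← Matrix.mulVec_mulVec]
    rw [this]
    exact hw.dotProduct_mulVec_pos hy


private lemma posDef_smul' {A : Matrix (Fin n) (Fin n) ℝ} (hA : A.PosDef) {c : ℝ} (hc : 0 < c) :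
    (c • A).PosDef := by
  refine Matrix.PosDef.of_dotProduct_mulVec_pos ?_ (fun x hx => ?_)
  · show (c • A)ᴴ = c • A
    rw [conjTranspose_smul, hA.isHermitian.eq, star_trivial]
  · rw [smul_mulVec, dotProduct_smul, smul_eq_mul]
    exact mul_pos hc (hA.dotProduct_mulVec_pos hx)

private def swapM (n : ℕ) (i j : Fin n) : Matrix (Fin n) (Fin n) ℝ :=
  Matrix.of fun a b => if a = Equiv.swap i j b then 1 else 0

private lemma swapM_mulVec (i j k : Fin n) (c : ℝ) :
    swapM n i j *ᵥ Pi.single k c = Pi.single (Equiv.swap i j k) c := by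
  ext a
  rw [Matrix.mulVec_single]
  simp only [swapM, Matrix.of_apply, Pi.single_apply, ite_mul, one_mul, zero_mul, Pi.smul_apply,
    Matrix.col_apply, MulOpposite.smul_eq_mul_unop, MulOpposite.unop_op]

private lemma swapM_transpose (i j : Fin n) : (swapM n i j)ᵀ = swapM n i j := by
  ext a b
  simp only [Matrix.transpose_apply, swapM, Matrix.of_apply]
  by_cases h : b = Equiv.swap i j a
  · rw [if_pos h, if_pos (by rw [h, Equiv.swap_apply_self])]
  · rw [if_neg h, if_neg (fun hc => h (by rw [hc, Equiv.swap_apply_self]))]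

private lemma swapM_mul_self (i j : Fin n) : swapM n i j * swapM n i j = 1 := by
  ext a c
  simp only [Matrix.mul_apply, swapM, Matrix.of_apply, mul_ite, mul_one, mul_zero, ite_mul,
    one_mul, zero_mul]
  rw [Finset.sum_ite_eq' Finset.univ (Equiv.swap i j c) (fun b => if a = Equiv.swap i j b then (1:ℝ) else 0)]
  simp [Matrix.one_apply, Equiv.swap_apply_self]

private lemma swapM_isUnit (i j : Fin n) : IsUnit (swapM n i j) :=
  (Matrix.isUnit_iff_isUnit_det _).mpr (Matrix.isUnit_det_of_right_inverse (swapM_mul_self i j))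

section Str

variable (g tg : Matrix (Fin n) (Fin n) ℝ →ₗ[ℝ] Matrix (Fin n) (Fin n) ℝ)

private lemma unit_map (hg : Function.Bijective g) (htgs : Function.Surjective tg)
    (hstr : ∀ x y, g x * y * g x = g (x * tg y * x)) {x : Matrix (Fin n) (Fin n) ℝ}
    (hx : IsUnit x) : IsUnit (g x) := by
  obtain ⟨z, hz⟩ := hg.2 1
  obtain ⟨y, hy⟩ := htgs (x⁻¹ * z * x⁻¹)
  have hxd : IsUnit x.det := (Matrix.isUnit_iff_isUnit_det x).mp hx
  have h := hstr x y
  rw [hy] at h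
  have hmid : x * (x⁻¹ * z * x⁻¹) * x = z := by
    simp only [← mul_assoc]
    rw [Matrix.mul_nonsing_inv _ hxd, one_mul, mul_assoc, Matrix.nonsing_inv_mul _ hxd, mul_one]
  rw [hmid, hz] at h
  exact (Matrix.isUnit_iff_isUnit_det _).mpr (Matrix.isUnit_det_of_right_inverse (show g x * (y * g x) = 1 by rw [← mul_assoc]; exact h))

private lemma unit_rev (hg : Function.Bijective g)
    (hstr : ∀ x y, g x * y * g x = g (x * tg y * x)) {x : Matrix (Fin n) (Fin n) ℝ}
    (hx : IsUnit (g x)) : IsUnit x := by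
  have hd : IsUnit (g x).det := (Matrix.isUnit_iff_isUnit_det _).mp hx
  have h := hstr x ((g x)⁻¹ * g 1 * (g x)⁻¹)
  have hL : g x * ((g x)⁻¹ * g 1 * (g x)⁻¹) * g x = g 1 := by
    simp only [← mul_assoc]
    rw [Matrix.mul_nonsing_inv _ hd, one_mul, mul_assoc, Matrix.nonsing_inv_mul _ hd, mul_one]
  rw [hL] at h
  have h1 : (1 : Matrix (Fin n) (Fin n) ℝ) = x * tg ((g x)⁻¹ * g 1 * (g x)⁻¹) * x := hg.1 h
  exact (Matrix.isUnit_iff_isUnit_det _).mpr (Matrix.isUnit_det_of_right_inverse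
    (show x * (tg ((g x)⁻¹ * g 1 * (g x)⁻¹) * x) = 1 by rw [← mul_assoc]; exact h1.symm))

private lemma unit_one (hg : Function.Bijective g) (htgs : Function.Surjective tg)
    (hstr : ∀ x y, g x * y * g x = g (x * tg y * x)) : IsUnit (g 1) :=
  unit_map g tg hg htgs hstr isUnit_one

private lemma sq_formula (hg : Function.Bijective g) (htgs : Function.Surjective tg)
    (hstr : ∀ x y, g x * y * g x = g (x * tg y * x)) (x : Matrix (Fin n) (Fin n) ℝ) :
    g (x * x) = g x * (g 1)⁻¹ * g x := by
  have hu : IsUnit (g 1) := unit_one g tg hg htgs hstr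
  have hd : IsUnit (g 1).det := (Matrix.isUnit_iff_isUnit_det _).mp hu
  obtain ⟨y0, hy0⟩ := htgs 1
  have h1 := hstr 1 y0
  rw [hy0] at h1
  simp only [one_mul, mul_one] at h1
  -- h1 : g 1 * y0 * g 1 = g 1
  have hy0' : y0 = (g 1)⁻¹ := by
    have : (g 1)⁻¹ * (g 1 * y0 * g 1) * (g 1)⁻¹ = y0 := by
      simp only [← mul_assoc]
      rw [Matrix.nonsing_inv_mul _ hd, one_mul, mul_assoc, Matrix.mul_nonsing_inv _ hd, mul_one]
    rw [h1] at this
    rw [← this, Matrix.nonsing_inv_mul _ hd, one_mul]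
  have h := hstr x y0
  rw [hy0, mul_one] at h
  rw [← h, hy0']

private lemma img_lemma (hg : Function.Bijective g) (htgs : Function.Surjective tg)
    (hstar : ∀ x, g xᵀ = (g x)ᵀ)
    (hstr : ∀ x y, g x * y * g x = g (x * tg y * x)) (b : Matrix (Fin n) (Fin n) ℝ)
    (hbs : bᵀ = b) (hbu : IsUnit b) :
    ∃ s : Matrix (Fin n) (Fin n) ℝ, s.PosDef ∧ g s = b * (g 1)⁻¹ * b := by
  obtain ⟨x, hx⟩ := hg.2 b
  have hxs : xᵀ = x := hg.1 (by rw [hstar, hx, hbs])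
  have hxu : IsUnit x := unit_rev g tg hg hstr (by rw [hx]; exact hbu)
  refine ⟨x * x, ?_, by rw [sq_formula g tg hg htgs hstr, hx]⟩
  have h := posDef_congr Matrix.PosDef.one hxu
  rw [mul_one, Matrix.conjTranspose_eq_transpose_of_trivial, hxs] at h
  exact h


open scoped MatrixOrder in
private lemma lem2 (hg : Function.Bijective g) (htgs : Function.Surjective tg)
    (hstar : ∀ x, g xᵀ = (g x)ᵀ)
    (hstr : ∀ x y, g x * y * g x = g (x * tg y * x))
    (h1 : (g 1).PosDef) {s : Matrix (Fin n) (Fin n) ℝ} (hs : s.PosDef) : (g s).PosDef := by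
  have hxx : CFC.sqrt s * CFC.sqrt s = s :=
    CFC.sqrt_mul_sqrt_self s (Matrix.nonneg_iff_posSemidef.mpr hs.posSemidef)
  set x := CFC.sqrt s with hxdef
  have hxh : xᵀ = x := by
    rw [← Matrix.conjTranspose_eq_transpose_of_trivial]
    exact (Matrix.nonneg_iff_posSemidef.mp (CFC.sqrt_nonneg s)).1
  have hxu : IsUnit x := by
    rw [Matrix.isUnit_iff_isUnit_det]
    have hdet : x.det * x.det = s.det := by rw [← Matrix.det_mul, hxx]
    refine isUnit_iff_ne_zero.mpr (fun h => ?_)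
    rw [h, mul_zero] at hdet
    exact hs.det_pos.ne' hdet.symm
  have hgx : (g x)ᴴ = g x := by
    rw [Matrix.conjTranspose_eq_transpose_of_trivial, ← hstar, hxh]
  have hgxu : IsUnit (g x) := unit_map g tg hg htgs hstr hxu
  have h := posDef_congr h1.inv hgxu
  rw [hgx] at h
  rw [← hxx, sq_formula g tg hg htgs hstr]
  exact h

private lemma lem1 (hg : Function.Bijective g) (htgs : Function.Surjective tg)
    (hstar : ∀ x, g xᵀ = (g x)ᵀ)
    (hstr : ∀ x y, g x * y * g x = g (x * tg y * x)) :
    (g 1).PosDef ∨ (-(g 1)).PosDef := by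
  have hu : IsUnit (g 1) := unit_one g tg hg htgs hstr
  have hud : IsUnit (g 1).det := (Matrix.isUnit_iff_isUnit_det _).mp hu
  have hwu : IsUnit ((g 1)⁻¹) := Matrix.isUnit_nonsing_inv_iff.mpr hu
  have hwd : IsUnit ((g 1)⁻¹).det := (Matrix.isUnit_iff_isUnit_det _).mp hwu
  have huh : (g 1)ᵀ = g 1 := by rw [← hstar, Matrix.transpose_one]
  have hwh : ((g 1)⁻¹).IsHermitian := by
    show ((g 1)⁻¹)ᴴ = (g 1)⁻¹
    rw [Matrix.conjTranspose_eq_transpose_of_trivial, Matrix.transpose_nonsing_inv, huh]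
  set w := (g 1)⁻¹ with hwdef
  set d := hwh.eigenvalues with hddef
  set Q : Matrix (Fin n) (Fin n) ℝ := (hwh.eigenvectorUnitary : Matrix (Fin n) (Fin n) ℝ)
    with hQdef
  have hQ1 : Qᴴ * Q = 1 := by
    rw [hQdef, ← Matrix.star_eq_conjTranspose]
    exact Matrix.mem_unitaryGroup_iff'.mp hwh.eigenvectorUnitary.2
  have hQ2 : Q * Qᴴ = 1 := by
    rw [hQdef, ← Matrix.star_eq_conjTranspose]
    exact Matrix.mem_unitaryGroup_iff.mp hwh.eigenvectorUnitary.2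
  have hQu : IsUnit Q := (Matrix.isUnit_iff_isUnit_det _).mpr (Matrix.isUnit_det_of_right_inverse hQ2)
  have hQHu : IsUnit Qᴴ := (Matrix.isUnit_iff_isUnit_det _).mpr (Matrix.isUnit_det_of_right_inverse hQ1)
  have hQspec : w = Q * Matrix.diagonal d * Qᴴ := by
    have h := hwh.spectral_theorem
    rwa [RCLike.ofReal_real_eq_id, Function.id_comp, Unitary.conjStarAlgAut_apply,
      Matrix.star_eq_conjTranspose] at h
  have hdnz : ∀ k, d k ≠ 0 := by
    intro k hk
    have hdet0 : w.det = 0 := by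
      rw [hwh.det_eq_prod_eigenvalues]
      exact Finset.prod_eq_zero (Finset.mem_univ k) (by simpa using hk)
    exact hwd.ne_zero hdet0
  by_cases hpos : ∀ k, 0 < d k
  · left
    have hwPD : w.PosDef := by
      rw [hQspec]
      exact posDef_congr (Matrix.PosDef.diagonal hpos) hQu
    rw [← Matrix.nonsing_inv_nonsing_inv (g 1) hud]
    exact hwPD.inv
  by_cases hneg : ∀ k, d k < 0
  · right
    have hwPD : (-w).PosDef := by
      have hdiagneg : Matrix.diagonal (fun k => -(d k)) = -Matrix.diagonal d := by
        ext a c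
        by_cases h : a = c <;> simp [h]
      have hsp : -w = Q * Matrix.diagonal (fun k => -(d k)) * Qᴴ := by
        rw [hdiagneg, mul_neg, neg_mul, ← hQspec]
      rw [hsp]
      exact posDef_congr (Matrix.PosDef.diagonal (fun k => neg_pos.mpr (hneg k))) hQu
    have hinv : (-w)⁻¹ = -(g 1) := Matrix.inv_eq_right_inv
      (by rw [neg_mul_neg, hwdef, Matrix.nonsing_inv_mul _ hud])
    rw [← hinv]
    exact hwPD.inv
  · exfalso
    push_neg at hpos hneg
    obtain ⟨j0, hj0⟩ := hpos
    obtain ⟨i0, hi0⟩ := hneg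
    have hj : d j0 < 0 := hj0.lt_of_ne (hdnz j0)
    have hi : 0 < d i0 := hi0.lt_of_ne (hdnz i0).symm
    set b := Q * swapM n i0 j0 * Qᴴ with hbdef
    have hbs : bᵀ = b := by
      rw [hbdef]
      simp only [Matrix.transpose_mul, Matrix.conjTranspose_eq_transpose_of_trivial,
        Matrix.transpose_transpose, swapM_transpose, mul_assoc]
    have hbu : IsUnit b := (hQu.mul (swapM_isUnit i0 j0)).mul hQHu
    obtain ⟨s2, hs2, hgs2⟩ := img_lemma g tg hg htgs hstar hstr b hbs hbu
    obtain ⟨s1, hs1, hgs1⟩ := img_lemma g tg hg htgs hstar hstr 1 Matrix.transpose_one isUnit_one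
    rw [one_mul, mul_one] at hgs1
    set s := (-(d j0)) • s1 + (d i0) • s2 with hsdef
    have hsPD : s.PosDef := (posDef_smul' hs1 (neg_pos.mpr hj)).add (posDef_smul' hs2 hi)
    have hsu : IsUnit (g s) := unit_map g tg hg htgs hstr hsPD.isUnit
    have hgs : g s = (-(d j0)) • w + (d i0) • (b * w * b) := by
      rw [hsdef, map_add, LinearMap.map_smul, LinearMap.map_smul, hgs1, hgs2]
    set v := Q *ᵥ Pi.single i0 1 with hvdef
    have hv : v ≠ 0 := by
      intro h
      have h2 : Qᴴ *ᵥ v = Pi.single i0 1 := by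
        rw [hvdef, Matrix.mulVec_mulVec, hQ1, Matrix.one_mulVec]
      rw [h, Matrix.mulVec_zero] at h2
      have h3 := congrFun h2 i0
      simp at h3
    have hcancel : ∀ X : Matrix (Fin n) (Fin n) ℝ, Qᴴ * (Q * X) = X := fun X => by
      rw [← mul_assoc, hQ1, one_mul]
    have hact : ∀ (Mm : Matrix (Fin n) (Fin n) ℝ) (z : Fin n → ℝ),
        (Q * Mm * Qᴴ) *ᵥ (Q *ᵥ z) = Q *ᵥ (Mm *ᵥ z) := fun Mm z => by
      rw [Matrix.mulVec_mulVec, mul_assoc (Q * Mm) Qᴴ Q, hQ1, mul_one, ← Matrix.mulVec_mulVec]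
    have hbwb : b * w * b = Q * (swapM n i0 j0 * Matrix.diagonal d * swapM n i0 j0) * Qᴴ := by
      rw [hbdef, hQspec]
      simp only [mul_assoc]
      rw [hcancel, hcancel]
    have hwv : w *ᵥ v = Q *ᵥ (Pi.single i0 (d i0 * 1) : Fin n → ℝ) := by
      rw [hvdef, hQspec, hact, Matrix.diagonal_mulVec_single]
    have hbv : (b * w * b) *ᵥ v = Q *ᵥ (Pi.single i0 (d j0 * 1) : Fin n → ℝ) := by
      rw [hvdef, hbwb, hact]
      congr 1
      rw [← Matrix.mulVec_mulVec, ← Matrix.mulVec_mulVec, swapM_mulVec, Equiv.swap_apply_left,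
        Matrix.diagonal_mulVec_single, swapM_mulVec, Equiv.swap_apply_right]
    have hz : (g s) *ᵥ v = 0 := by
      rw [hgs, Matrix.add_mulVec, Matrix.smul_mulVec, Matrix.smul_mulVec, hwv, hbv,
        ← Matrix.mulVec_smul, ← Matrix.mulVec_smul, ← Matrix.mulVec_add]
      have hzero : (-(d j0)) • (Pi.single i0 (d i0 * 1) : Fin n → ℝ) + (d i0) • (Pi.single i0 (d j0 * 1) : Fin n → ℝ)
          = (0 : Fin n → ℝ) := by
        ext k
        by_cases hk : k = i0 <;> simp [Pi.single_apply, hk] <;> ring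
      rw [hzero, Matrix.mulVec_zero]
    exact hv (Matrix.mulVec_injective_iff_isUnit.mpr hsu (by rw [hz, Matrix.mulVec_zero]))


private lemma bij_neg (hg : Function.Bijective ⇑g) : Function.Bijective ⇑(-g) := by
  constructor
  · intro a b h
    simp only [LinearMap.neg_apply, neg_inj] at h
    exact hg.1 h
  · intro b
    obtain ⟨a, ha⟩ := hg.2 (-b)
    exact ⟨a, by simp [LinearMap.neg_apply, ha]⟩

private lemma surj_neg (hg : Function.Surjective ⇑g) : Function.Surjective ⇑(-g) := by
  intro b
  obtain ⟨a, ha⟩ := hg (-b)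
  exact ⟨a, by simp [LinearMap.neg_apply, ha]⟩

private lemma hstar_neg (hstar : ∀ x, g xᵀ = (g x)ᵀ) : ∀ x, (-g) xᵀ = ((-g) x)ᵀ := by
  intro x
  simp only [LinearMap.neg_apply, hstar x, Matrix.transpose_neg]

private lemma hstr_neg (hstr : ∀ x y, g x * y * g x = g (x * tg y * x)) :
    ∀ x y, (-g) x * y * (-g) x = (-g) (x * (-tg) y * x) := by
  intro x y
  simp only [LinearMap.neg_apply, neg_mul, mul_neg, neg_neg, map_neg]
  exact hstr x y

end Str

private lemma notNeg1 (hn : 1 ≤ n) : ¬ ((-1 : Matrix (Fin n) (Fin n) ℝ).PosDef) := by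
  intro h
  have h0 := h.add Matrix.PosDef.one
  rw [neg_add_cancel] at h0
  have hx : (Pi.single (⟨0, hn⟩ : Fin n) (1:ℝ) : Fin n → ℝ) ≠ 0 := by
    intro hx0
    have := congrFun hx0 ⟨0, hn⟩
    simp at this
  have h2 := h0.dotProduct_mulVec_pos hx
  simp [Matrix.zero_mulVec] at h2

end Aux

theorem stmt19 {n : ℕ} (hn : 1 ≤ n)
    (g : Matrix (Fin n) (Fin n) ℝ →ₗ[ℝ] Matrix (Fin n) (Fin n) ℝ)
    (hg : Function.Bijective g)
    (hstar : ∀ x : Matrix (Fin n) (Fin n) ℝ, g xᵀ = (g x)ᵀ)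
    (tg : Matrix (Fin n) (Fin n) ℝ →ₗ[ℝ] Matrix (Fin n) (Fin n) ℝ)
    (htg : ∀ a b : Matrix (Fin n) (Fin n) ℝ, (g a * b).trace = (a * tg b).trace)
    (hstr : ∀ x y : Matrix (Fin n) (Fin n) ℝ, g x * y * g x = g (x * tg y * x)) :
    ⇑g '' {A : Matrix (Fin n) (Fin n) ℝ | A.PosDef} = {A : Matrix (Fin n) (Fin n) ℝ | A.PosDef} ∨
      ⇑g '' {A : Matrix (Fin n) (Fin n) ℝ | A.PosDef} =
        -{A : Matrix (Fin n) (Fin n) ℝ | A.PosDef} := by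
  classical
  have htker : ∀ c : Matrix (Fin n) (Fin n) ℝ, tg c = 0 → c = 0 := by
    intro c hc
    have htr : ∀ a : Matrix (Fin n) (Fin n) ℝ, (a * c).trace = 0 := by
      intro a
      obtain ⟨a', ha'⟩ := hg.2 a
      have h := htg a' c
      rw [ha', hc, mul_zero, Matrix.trace_zero] at h
      exact h
    ext p q
    have h := htr (Matrix.single q p 1)
    simp only [Matrix.zero_apply]
    rw [show (Matrix.single q p (1:ℝ) * c).trace = c p q from by
      simp [Matrix.trace, Matrix.diag, Matrix.mul_apply, Matrix.single, ite_and,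
        Finset.sum_ite_eq, Finset.sum_ite_eq']] at h
    exact h
  have htinj : Function.Injective ⇑tg := by
    intro a b hab
    have h0 : tg (a - b) = 0 := by rw [map_sub, hab, sub_self]
    exact sub_eq_zero.mp (htker _ h0)
  have htgs : Function.Surjective ⇑tg := LinearMap.injective_iff_surjective.mp htinj
  have htgb : Function.Bijective ⇑tg := ⟨htinj, htgs⟩
  set e := LinearEquiv.ofBijective g hg with hedef
  set gi : Matrix (Fin n) (Fin n) ℝ →ₗ[ℝ] Matrix (Fin n) (Fin n) ℝ := (e.symm : Matrix (Fin n) (Fin n) ℝ ≃ₗ[ℝ] Matrix (Fin n) (Fin n) ℝ).toLinearMap with hgidef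
  have hgig : ∀ x, g (gi x) = x := fun x => e.apply_symm_apply x
  have hgig' : ∀ x, gi (g x) = x := fun x => e.symm_apply_apply x
  have hgib : Function.Bijective ⇑gi := e.symm.bijective
  set te := LinearEquiv.ofBijective tg htgb with htedef
  set ti : Matrix (Fin n) (Fin n) ℝ →ₗ[ℝ] Matrix (Fin n) (Fin n) ℝ := (te.symm : Matrix (Fin n) (Fin n) ℝ ≃ₗ[ℝ] Matrix (Fin n) (Fin n) ℝ).toLinearMap with htidef
  have htig : ∀ x, tg (ti x) = x := fun x => te.apply_symm_apply x
  have htis : Function.Surjective ⇑ti := te.symm.surjective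
  have hstar_gi : ∀ x, gi xᵀ = (gi x)ᵀ := by
    intro x
    apply hg.1
    rw [hgig, hstar, hgig]
  have hstr_gi : ∀ a y, gi a * y * gi a = gi (a * ti y * a) := by
    intro a y
    apply hg.1
    rw [hgig]
    have h := hstr (gi a) (ti y)
    rw [hgig, htig] at h
    exact h.symm
  rcases lem1 g tg hg htgs hstar hstr with hU | hU
  · rcases lem1 gi ti hgib htis hstar_gi hstr_gi with hU' | hU'
    · left
      ext a
      simp only [Set.mem_image, Set.mem_setOf_eq]
      constructor
      · rintro ⟨s, hs, rfl⟩
        exact lem2 g tg hg htgs hstar hstr hU hs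
      · intro ha
        exact ⟨gi a, lem2 gi ti hgib htis hstar_gi hstr_gi hU' ha, hgig a⟩
    · exfalso
      have hU'' : ((-gi) 1).PosDef := by rw [LinearMap.neg_apply]; exact hU'
      have h2 := lem2 (-gi) (-ti) (bij_neg gi hgib) (surj_neg ti htis)
        (hstar_neg gi hstar_gi) (hstr_neg gi ti hstr_gi) hU'' hU
      rw [LinearMap.neg_apply, hgig'] at h2
      exact notNeg1 hn h2
  · rcases lem1 (-gi) (-ti) (bij_neg gi hgib) (surj_neg ti htis)
        (hstar_neg gi hstar_gi) (hstr_neg gi ti hstr_gi) with hU' | hU'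
    · right
      have hUn : ((-g) 1).PosDef := by rw [LinearMap.neg_apply]; exact hU
      ext a
      simp only [Set.mem_image, Set.mem_setOf_eq, Set.mem_neg]
      constructor
      · rintro ⟨s, hs, rfl⟩
        have h2 := lem2 (-g) (-tg) (bij_neg g hg) (surj_neg tg htgs)
          (hstar_neg g hstar) (hstr_neg g tg hstr) hUn hs
        rwa [LinearMap.neg_apply] at h2
      · intro ha
        refine ⟨gi a, ?_, hgig a⟩
        have h2 := lem2 (-gi) (-ti) (bij_neg gi hgib) (surj_neg ti htis)
          (hstar_neg gi hstar_gi) (hstr_neg gi ti hstr_gi) hU' ha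
        rwa [LinearMap.neg_apply, map_neg, neg_neg] at h2
    · exfalso
      have hU'' : (gi 1).PosDef := by
        rw [LinearMap.neg_apply, neg_neg] at hU'
        exact hU'
      have h2 := lem2 gi ti hgib htis hstar_gi hstr_gi hU'' hU
      rw [map_neg, hgig'] at h2
      exact notNeg1 hn h2
end
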